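/- Annotated stack tree automata are effectively closed under intersection: for any two order-n annotated stack tree automata A and A' over the same alphabet Γ and control states P, there exists an order-n annotated stack tree automaton A'' with L(A'') = L(A) ∩ L(A'). -/

import Mathlib

/-! ## Annotated stacks of order at most `n` over alphabet `Γ`.

`AnnStack Γ n k` is the type of order-`k` stacks whose symbols are annotated
by stacks of order at most `n`.  An order-`(k+1)` stack is a sequence of
order-`k` stacks; an order-`1` stack is a sequence of characters, each
annotated by a stack of some order `m` with `1 ≤ m ≤ n`. -/
inductive AnnStack (Γ : Type) (n : ℕ) : ℕ → Type where
  | nil (k : ℕ) : AnnStack Γ n k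
  | consK {k : ℕ} (hk : 1 ≤ k) (hd : AnnStack Γ n k) (tl : AnnStack Γ n (k + 1)) :
      AnnStack Γ n (k + 1)
  | cons1 {m : ℕ} (a : Γ) (hm : 1 ≤ m) (hmn : m ≤ n) (ann : AnnStack Γ n m)
      (tl : AnnStack Γ n 1) : AnnStack Γ n 1

namespace AnnStack

variable {Γ : Type} {n : ℕ}

/-- `TopRew a b j s s'`: `s'` is `s` with its top character `a` rewritten to `b`
(the annotation is kept). -/
inductive TopRew (a b : Γ) : (j : ℕ) → AnnStack Γ n j → AnnStack Γ n j → Prop where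
  | base {m : ℕ} (hm : 1 ≤ m) (hmn : m ≤ n) (ann : AnnStack Γ n m) (tl : AnnStack Γ n 1) :
      TopRew a b 1 (AnnStack.cons1 a hm hmn ann tl) (AnnStack.cons1 b hm hmn ann tl)
  | step {j : ℕ} (hj : 1 ≤ j) {hd hd' : AnnStack Γ n j} (tl : AnnStack Γ n (j + 1)) :
      TopRew a b j hd hd' →
      TopRew a b (j + 1) (AnnStack.consK hj hd tl) (AnnStack.consK hj hd' tl)

/-- `PopAt k j s s'`: `s'` is the result of applying `pop_k` to the order-`j` stack `s`. -/
inductive PopAt : (k : ℕ) → (j : ℕ) → AnnStack Γ n j → AnnStack Γ n j → Prop where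
  | base1 {m : ℕ} (a : Γ) (hm : 1 ≤ m) (hmn : m ≤ n) (ann : AnnStack Γ n m)
      (tl : AnnStack Γ n 1) : PopAt 1 1 (AnnStack.cons1 a hm hmn ann tl) tl
  | baseK {k : ℕ} (hk : 1 ≤ k) (hd : AnnStack Γ n k) (tl : AnnStack Γ n (k + 1)) :
      PopAt (k + 1) (k + 1) (AnnStack.consK hk hd tl) tl
  | step {k j : ℕ} (hj : 1 ≤ j) {hd hd' : AnnStack Γ n j} (tl : AnnStack Γ n (j + 1)) :
      PopAt k j hd hd' →
      PopAt k (j + 1) (AnnStack.consK hj hd tl) (AnnStack.consK hj hd' tl)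

/-- `PushAt k j s s'`: `s'` is the result of applying `push_k` (duplicate the
topmost order-`(k-1)` stack) to the order-`j` stack `s`. -/
inductive PushAt : (k : ℕ) → (j : ℕ) → AnnStack Γ n j → AnnStack Γ n j → Prop where
  | base {k : ℕ} (hk : 1 ≤ k) (hd : AnnStack Γ n k) (tl : AnnStack Γ n (k + 1)) :
      PushAt (k + 1) (k + 1) (AnnStack.consK hk hd tl)
        (AnnStack.consK hk hd (AnnStack.consK hk hd tl))
  | step {k j : ℕ} (hj : 1 ≤ j) {hd hd' : AnnStack Γ n j} (tl : AnnStack Γ n (j + 1)) :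
      PushAt k j hd hd' →
      PushAt k (j + 1) (AnnStack.consK hj hd tl) (AnnStack.consK hj hd' tl)

/-- `TopChar j s a`: the top character of the order-`j` stack `s` is `a`. -/
inductive TopChar : (j : ℕ) → AnnStack Γ n j → Γ → Prop where
  | base {m : ℕ} (a : Γ) (hm : 1 ≤ m) (hmn : m ≤ n) (ann : AnnStack Γ n m)
      (tl : AnnStack Γ n 1) : TopChar 1 (AnnStack.cons1 a hm hmn ann tl) a
  | step {j : ℕ} (hj : 1 ≤ j) {hd : AnnStack Γ n j} (tl : AnnStack Γ n (j + 1)) {a : Γ} :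
      TopChar j hd a → TopChar (j + 1) (AnnStack.consK hj hd tl) a

/-- `TailAt k j s r`: `r` is the order-`k` stack obtained by applying `pop_k` at the
topmost levels of the order-`j` stack `s` (the order-`k` component `s_k` of the
top-of-stack decomposition of `s`). -/
inductive TailAt : (k : ℕ) → (j : ℕ) → AnnStack Γ n j → AnnStack Γ n k → Prop where
  | base1 {m : ℕ} (a : Γ) (hm : 1 ≤ m) (hmn : m ≤ n) (ann : AnnStack Γ n m)
      (tl : AnnStack Γ n 1) : TailAt 1 1 (AnnStack.cons1 a hm hmn ann tl) tl
  | baseK {k : ℕ} (hk : 1 ≤ k) (hd : AnnStack Γ n k) (tl : AnnStack Γ n (k + 1)) :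
      TailAt (k + 1) (k + 1) (AnnStack.consK hk hd tl) tl
  | step {k j : ℕ} (hj : 1 ≤ j) {hd : AnnStack Γ n j} (tl : AnnStack Γ n (j + 1))
      {r : AnnStack Γ n k} : TailAt k j hd r →
      TailAt k (j + 1) (AnnStack.consK hj hd tl) r

/-- `Cons1Top a ann j s s'`: `s'` is `s` with the annotated character `(a, ann)`
pushed onto its topmost order-1 stack. -/
inductive Cons1Top (a : Γ) {m : ℕ} (ann : AnnStack Γ n m) :
    (j : ℕ) → AnnStack Γ n j → AnnStack Γ n j → Prop where
  | base (hm : 1 ≤ m) (hmn : m ≤ n) (t : AnnStack Γ n 1) :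
      Cons1Top a ann 1 t (AnnStack.cons1 a hm hmn ann t)
  | step {j : ℕ} (hj : 1 ≤ j) {hd hd' : AnnStack Γ n j} (tl : AnnStack Γ n (j + 1)) :
      Cons1Top a ann j hd hd' →
      Cons1Top a ann (j + 1) (AnnStack.consK hj hd tl) (AnnStack.consK hj hd' tl)

/-- `TopAnn j s m ann`: the annotation of the top character of the order-`j` stack `s`
is the order-`m` stack `ann`. -/
inductive TopAnn : (j : ℕ) → AnnStack Γ n j → (m : ℕ) → AnnStack Γ n m → Prop where
  | base {m : ℕ} (a : Γ) (hm : 1 ≤ m) (hmn : m ≤ n) (ann : AnnStack Γ n m)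
      (tl : AnnStack Γ n 1) : TopAnn 1 (AnnStack.cons1 a hm hmn ann tl) m ann
  | step {j : ℕ} (hj : 1 ≤ j) {hd : AnnStack Γ n j} (tl : AnnStack Γ n (j + 1))
      {m : ℕ} {ann : AnnStack Γ n m} : TopAnn j hd m ann →
      TopAnn (j + 1) (AnnStack.consK hj hd tl) m ann

/-- `ReplaceUpto k r j s s'`: `s'` is `s` with its topmost order-`k` component
replaced by `r` (all structure of `s` strictly above order `k` is kept). -/
inductive ReplaceUpto (k : ℕ) (r : AnnStack Γ n k) :
    (j : ℕ) → AnnStack Γ n j → AnnStack Γ n j → Prop where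
  | base (s : AnnStack Γ n k) : ReplaceUpto k r k s r
  | step {j : ℕ} (hj : 1 ≤ j) {hd hd' : AnnStack Γ n j} (tl : AnnStack Γ n (j + 1)) :
      ReplaceUpto k r j hd hd' →
      ReplaceUpto k r (j + 1) (AnnStack.consK hj hd tl) (AnnStack.consK hj hd' tl)

end AnnStack

/-- The order-`n` stack operations: `rew(a,b)`, `push_k` (2 ≤ k ≤ n),
`copy-push_k`, `pop_k`, `collapse_k` (1 ≤ k ≤ n). -/
inductive StackOp (Γ : Type) where
  | rew (a b : Γ)
  | push (k : ℕ)
  | cpush (k : ℕ)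
  | pop (k : ℕ)
  | collapse (k : ℕ)

/-- Semantics of a stack operation on order-`n` stacks. -/
def ApplyOp {Γ : Type} {n : ℕ} : StackOp Γ → AnnStack Γ n n → AnnStack Γ n n → Prop
  | .rew a b => fun s s' => AnnStack.TopRew a b n s s'
  | .push k => fun s s' => 2 ≤ k ∧ k ≤ n ∧ AnnStack.PushAt k n s s'
  | .cpush k => fun s s' => 1 ≤ k ∧ k ≤ n ∧
      ∃ (a : Γ) (ann : AnnStack Γ n k), AnnStack.TopChar n s a ∧
        AnnStack.TailAt k n s ann ∧ AnnStack.Cons1Top a ann n s s'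
  | .pop k => fun s s' => 1 ≤ k ∧ k ≤ n ∧ AnnStack.PopAt k n s s'
  | .collapse k => fun s s' => 1 ≤ k ∧ k ≤ n ∧
      ∃ ann : AnnStack Γ n k, AnnStack.TopAnn n s k ann ∧ AnnStack.ReplaceUpto k ann n s s'
/-! ## Annotated stack trees -/

/-- An (order-`n`) annotated stack tree with leaf labels drawn from `L`:
leaves are labelled by a pair of an `L`-label and an order-`n` annotated stack,
internal nodes by an order-`n` annotated stack.  Ordinary annotated stack trees
take `L = P` (the control states); "extended" trees used for partial runs take
`L = Q` (the states of a tree automaton). -/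
inductive STree (Γ : Type) (L : Type) (n : ℕ) where
  | leaf : L → AnnStack Γ n n → STree Γ L n
  | node : AnnStack Γ n n → List (STree Γ L n) → STree Γ L n

namespace STree

variable {Γ L : Type} {n : ℕ}

/-- Well-formedness: every internal node has at least one child
(so that the node/leaf distinction matches tree domains). -/
inductive TreeWF : STree Γ L n → Prop where
  | leaf (q : L) (s : AnnStack Γ n n) : TreeWF (STree.leaf q s)
  | node (s : AnnStack Γ n n) {cs : List (STree Γ L n)} :
      cs ≠ [] → (∀ t ∈ cs, TreeWF t) → TreeWF (STree.node s cs)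

/-- The stack labelling the root of a tree. -/
def rootStack : STree Γ L n → AnnStack Γ n n
  | .leaf _ s => s
  | .node s _ => s

/-- The subtree of `t` at position `v` (positions are lists of 0-based child indices). -/
def subtreeAt : STree Γ L n → List ℕ → Option (STree Γ L n)
  | t, [] => some t
  | .leaf _ _, _ :: _ => none
  | .node _ cs, i :: v =>
      match cs[i]? with
      | some c => subtreeAt c v
      | none => none

/-- Replace the subtree of `t` at position `v` by `r`. -/
def replaceAt : STree Γ L n → List ℕ → STree Γ L n → Option (STree Γ L n)
  | _, [], r => some r
  | .leaf _ _, _ :: _, _ => none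
  | .node s cs, i :: v, r =>
      match cs[i]? with
      | some c => (replaceAt c v r).map fun c' => STree.node s (cs.set i c')
      | none => none

/-- `LeavesAre t ls`: the left-to-right sequence of leaf labels of `t` is `ls`. -/
inductive LeavesAre : STree Γ L n → List L → Prop where
  | leaf (q : L) (s : AnnStack Γ n n) : LeavesAre (STree.leaf q s) [q]
  | node (s : AnnStack Γ n n) {cs : List (STree Γ L n)} {ls : List (List L)} :
      cs.length = ls.length →
      (∀ i (h1 : i < cs.length) (h2 : i < ls.length),
        LeavesAre (cs.get ⟨i, h1⟩) (ls.get ⟨i, h2⟩)) →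
      LeavesAre (STree.node s cs) ls.flatten

/-- `LeafPosList t vs`: the left-to-right sequence of leaf positions of `t` is `vs`. -/
inductive LeafPosList : STree Γ L n → List (List ℕ) → Prop where
  | leaf (q : L) (s : AnnStack Γ n n) : LeafPosList (STree.leaf q s) [[]]
  | node (s : AnnStack Γ n n) {cs : List (STree Γ L n)} {pss : List (List (List ℕ))} :
      cs.length = pss.length →
      (∀ i (h1 : i < cs.length) (h2 : i < pss.length),
        LeafPosList (cs.get ⟨i, h1⟩) (pss.get ⟨i, h2⟩)) →
      LeafPosList (STree.node s cs)
        ((pss.mapIdx fun i ps => ps.map fun v => i :: v).flatten)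

/-- There is a leaf of `t` at position `v`. -/
def HasLeafAt (t : STree Γ L n) (v : List ℕ) : Prop :=
  ∃ (q : L) (s : AnnStack Γ n n), subtreeAt t v = some (STree.leaf q s)

/-- There is a leaf of `t` at position `v` with label `q`. -/
def LeafLabelAt (t : STree Γ L n) (v : List ℕ) (q : L) : Prop :=
  ∃ s : AnnStack Γ n n, subtreeAt t v = some (STree.leaf q s)

end STree

/-! ## Ground annotated stack tree rewrite systems -/

/-- The operations of a GASTRS: stack operations applied at a leaf,
node creation (fork) and node destruction (join). -/
inductive TRule (Γ P : Type) where
  | op : P → StackOp Γ → P → TRule Γ P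
  | create : P → List P → TRule Γ P
  | destroy : List P → P → TRule Γ P

/-- An order-`n` ground annotated stack tree rewrite system:
a finite set of operations over alphabet `Γ` and control states `P`. -/
structure GASTRS (Γ P : Type) where
  R : Set (TRule Γ P)
  finR : R.Finite

/-- One-step rewriting of (possibly extended) stack trees, where control states
are embedded into the leaf-label type `L` via `ι`.  Operations apply at leaves. -/
inductive StepI {Γ P L : Type} {n : ℕ} (G : GASTRS Γ P) (ι : P → L) :
    STree Γ L n → STree Γ L n → Prop where
  | op {p : P} {θ : StackOp Γ} {p' : P} {s s' : AnnStack Γ n n} :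
      TRule.op p θ p' ∈ G.R → ApplyOp θ s s' →
      StepI G ι (STree.leaf (ι p) s) (STree.leaf (ι p') s')
  | create {p : P} {ps : List P} {s : AnnStack Γ n n} :
      TRule.create p ps ∈ G.R → ps ≠ [] →
      StepI G ι (STree.leaf (ι p) s)
        (STree.node s (ps.map fun p' => STree.leaf (ι p') s))
  | destroy {ps : List P} {p : P} {cs : List (STree Γ L n)} {s : AnnStack Γ n n} :
      TRule.destroy ps p ∈ G.R → ps ≠ [] →
      List.Forall₂ (fun (p' : P) (c : STree Γ L n) =>
        ∃ s' : AnnStack Γ n n, c = STree.leaf (ι p') s') ps cs →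
      StepI G ι (STree.node s cs) (STree.leaf (ι p) s)
  | ctx {s : AnnStack Γ n n} (l₁ l₂ : List (STree Γ L n)) {t t' : STree Γ L n} :
      StepI G ι t t' →
      StepI G ι (STree.node s (l₁ ++ t :: l₂)) (STree.node s (l₁ ++ t' :: l₂))

/-- Reachability: the reflexive-transitive closure of one-step rewriting. -/
def Reaches {Γ P L : Type} {n : ℕ} (G : GASTRS Γ P) (ι : P → L) :
    STree Γ L n → STree Γ L n → Prop :=
  Relation.ReflTransGen (StepI G ι)

/-- In `G` there is at most one node-destruction rule per resulting control state. -/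
def UniqueDestroy {Γ P : Type} (G : GASTRS Γ P) : Prop :=
  ∀ (ps ps' : List P) (p : P),
    TRule.destroy ps p ∈ G.R → TRule.destroy ps' p ∈ G.R → ps = ps'
/-! ## Annotated stack tree automata

An order-`n` annotated stack tree automaton is a bottom-up tree automaton whose
transitions `q —(i,m),σ→ q'` are labelled by states `σ` of a nested alternating
stack automaton.  We split the data into a *carrier* (the states, the embedding
of the control states, the final state sets) and the *transition relations*,
so that saturation (which adds transitions over a fixed carrier)
can be expressed as a function on transition structures. -/

/-- The carrier of an annotated stack tree automaton:
tree states `Q ⊇ P`, final tree states `F`, stack-automaton states `SS`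
(the states of all orders live in `SS`) and accepting stack states `Fs k`
for each order `k`. -/
structure ASTCarrier (Γ P : Type) where
  Q : Type
  ι : P → Q
  ι_inj : Function.Injective ι
  F : Set Q
  SS : Type
  Fs : ℕ → Set SS

/-- The transitions of an annotated stack tree automaton over carrier `C`:
* `deltaT q i m q' σ` : a tree transition `q —(i,m),σ→ q'`;
* `deltaHi k σ σ' S` : an order-`k` stack transition `σ —σ'→ S` (used for `k ≥ 2`);
* `delta1 σ a mb Sb S` : an order-`1` stack transition `σ —a,S_b→ S` where the
  annotation of `a` is read from all states of `Sb` (a set of order-`mb` states). -/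
structure ASTTrans (Γ : Type) {P : Type} (C : ASTCarrier Γ P) where
  deltaT : C.Q → ℕ → ℕ → C.Q → C.SS → Prop
  deltaHi : ℕ → C.SS → C.SS → Set C.SS → Prop
  delta1 : C.SS → Γ → ℕ → Set C.SS → Set C.SS → Prop

variable {Γ P : Type}

/-- The stack-automaton states occurring in some transition of `D`. -/
def statesOf (C : ASTCarrier Γ P) (D : ASTTrans Γ C) : Set C.SS :=
  {σ | (∃ q i m q', D.deltaT q i m q' σ) ∨
       (∃ k σ' S, D.deltaHi k σ σ' S) ∨
       (∃ k τ S, D.deltaHi k τ σ S) ∨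
       (∃ k τ σ' S, D.deltaHi k τ σ' S ∧ σ ∈ S) ∨
       (∃ a mb Sb S, D.delta1 σ a mb Sb S) ∨
       (∃ τ a mb Sb S, D.delta1 τ a mb Sb S ∧ (σ ∈ Sb ∨ σ ∈ S))}

/-- The automaton `(C, D)` is a *finite* automaton: finitely many tree states,
finitely many stack states occurring in transitions, finite accepting sets. -/
def FiniteAut (C : ASTCarrier Γ P) (D : ASTTrans Γ C) : Prop :=
  Finite C.Q ∧ (statesOf C D).Finite ∧ ∀ k, (C.Fs k).Finite

/-- Acceptance of annotated stacks by the nested alternating stack automaton: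
`SAcc n C D k σ s` holds iff the order-`k` stack `s` is accepted from state `σ`.
A subset of `Fs k` must be reached at the end of each order-`k` stack;
annotations are read in an alternating fashion. -/
inductive SAcc (n : ℕ) (C : ASTCarrier Γ P) (D : ASTTrans Γ C) :
    (k : ℕ) → C.SS → AnnStack Γ n k → Prop where
  | nil {k : ℕ} {σ : C.SS} : σ ∈ C.Fs k → SAcc n C D k σ (AnnStack.nil k)
  | consK {k : ℕ} (hk : 1 ≤ k) {σ σ' : C.SS} {S : Set C.SS}
      {hd : AnnStack Γ n k} {tl : AnnStack Γ n (k + 1)} :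
      D.deltaHi (k + 1) σ σ' S → SAcc n C D k σ' hd →
      (∀ τ ∈ S, SAcc n C D (k + 1) τ tl) →
      SAcc n C D (k + 1) σ (AnnStack.consK hk hd tl)
  | cons1 {m : ℕ} (a : Γ) (hm : 1 ≤ m) (hmn : m ≤ n) {σ : C.SS} {Sb S : Set C.SS}
      {ann : AnnStack Γ n m} {tl : AnnStack Γ n 1} :
      D.delta1 σ a m Sb S → (∀ τ ∈ Sb, SAcc n C D m τ ann) →
      (∀ τ ∈ S, SAcc n C D 1 τ tl) →
      SAcc n C D 1 σ (AnnStack.cons1 a hm hmn ann tl)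

/-- `IsRun n C D lab t ρ`: `ρ` (assigning a tree state to every position) is a
run of the automaton over the tree `t` whose leaf labels are mapped into tree
states by `lab`: every leaf is labelled by its (embedded) control state, and
the label of each internal node is justified by transitions reading the states
and stacks of all its children. -/
def IsRun (n : ℕ) (C : ASTCarrier Γ P) (D : ASTTrans Γ C) {L : Type} (lab : L → C.Q)
    (t : STree Γ L n) (ρ : List ℕ → C.Q) : Prop :=
  (∀ (v : List ℕ) (q : L) (s : AnnStack Γ n n),
      STree.subtreeAt t v = some (STree.leaf q s) → ρ v = lab q) ∧
  (∀ (v : List ℕ) (s : AnnStack Γ n n) (cs : List (STree Γ L n)),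
      STree.subtreeAt t v = some (STree.node s cs) →
      ∀ i (hi : i < cs.length), ∃ σ : C.SS,
        D.deltaT (ρ v) (i + 1) cs.length (ρ (v ++ [i])) σ ∧
        SAcc n C D n σ (STree.rootStack (cs.get ⟨i, hi⟩)))

/-- The root of the run is read by a transition from a final state. -/
def RootAcc (n : ℕ) (C : ASTCarrier Γ P) (D : ASTTrans Γ C) {L : Type}
    (t : STree Γ L n) (ρ : List ℕ → C.Q) : Prop :=
  ∃ (qf : C.Q) (σ : C.SS), qf ∈ C.F ∧ D.deltaT qf 1 1 (ρ []) σ ∧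
    SAcc n C D n σ (STree.rootStack t)

/-- The automaton accepts the tree `t` (with leaf labels embedded by `lab`). -/
def AcceptsFrom (n : ℕ) (C : ASTCarrier Γ P) (D : ASTTrans Γ C) {L : Type}
    (lab : L → C.Q) (t : STree Γ L n) : Prop :=
  ∃ ρ : List ℕ → C.Q, IsRun n C D lab t ρ ∧ RootAcc n C D t ρ

/-- The language of the automaton: the set of (well-formed) order-`n` annotated
stack trees over `Γ` and `P` that it accepts. -/
def Lang (n : ℕ) (C : ASTCarrier Γ P) (D : ASTTrans Γ C) : Set (STree Γ P n) :=
  {t | STree.TreeWF t ∧ AcceptsFrom n C D C.ι t}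

/-- The extended-sense language `L_{qs}`: trees whose leaves carry arbitrary
states of the automaton (prefixes of accepting runs), with leaf state
sequence `qs`. -/
def LangExt (n : ℕ) (C : ASTCarrier Γ P) (D : ASTTrans Γ C) (qs : List C.Q) :
    Set (STree Γ C.Q n) :=
  {t | STree.TreeWF t ∧ STree.LeavesAre t qs ∧ AcceptsFrom n C D id t}

/-- `pre*(G, A₀)`: the set of trees from which a tree of `L(A₀)` is reachable. -/
def preStar (n : ℕ) (G : GASTRS Γ P) (C : ASTCarrier Γ P) (D₀ : ASTTrans Γ C) :
    Set (STree Γ P n) :=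
  {t | ∃ t', Reaches G id t t' ∧ t' ∈ Lang n C D₀}

/-- A set of order-`n` annotated stack trees is regular if it is the language of
some finite order-`n` annotated stack tree automaton. -/
def RegularSet (n : ℕ) (S : Set (STree Γ P n)) : Prop :=
  ∃ (C : ASTCarrier Γ P) (D : ASTTrans Γ C), FiniteAut C D ∧ Lang n C D = S

/-- The marking used by the emptiness algorithm: control states are marked, and
a state `q` is marked if for some `m ≥ 1` and every `1 ≤ i ≤ m` there is a
transition `q —(i,m),σ→ q'` with `q'` marked and the stack language of `σ`
nonempty. -/
inductive Marked (n : ℕ) (C : ASTCarrier Γ P) (D : ASTTrans Γ C) : C.Q → Prop where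
  | base (p : P) : Marked n C D (C.ι p)
  | step {q : C.Q} {m : ℕ} (qs : ℕ → C.Q) (σs : ℕ → C.SS) : 1 ≤ m →
      (∀ i, 1 ≤ i → i ≤ m →
        D.deltaT q i m (qs i) (σs i) ∧ ∃ s : AnnStack Γ n n, SAcc n C D n (σs i) s) →
      (∀ i, 1 ≤ i → i ≤ m → Marked n C D (qs i)) →
      Marked n C D q

/-- `σ` labels some tree transition of `D`. -/
def TreeLabel (C : ASTCarrier Γ P) (D : ASTTrans Γ C) (σ : C.SS) : Prop :=
  ∃ q i m q', D.deltaT q i m q' σ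

/-- `σ` is the intermediate label of some higher-order stack transition of `D`. -/
def HiLabel (C : ASTCarrier Γ P) (D : ASTTrans Γ C) (σ : C.SS) : Prop :=
  ∃ k τ S, D.deltaHi k τ σ S

/-- `σ` has an incoming stack transition (it occurs in a target set or
in an annotation set). -/
def IncomingS (C : ASTCarrier Γ P) (D : ASTTrans Γ C) (σ : C.SS) : Prop :=
  (∃ k τ σ' S, D.deltaHi k τ σ' S ∧ σ ∈ S) ∨
  (∃ τ a mb Sb S, D.delta1 τ a mb Sb S ∧ (σ ∈ Sb ∨ σ ∈ S))

/-- Normalization of an automaton, as assumed by the saturation algorithm: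
control states have no incoming tree transitions and are non-final; tree
transitions are well-indexed, avoid final targets, and have unique labels per
endpoints (and dually for stack transitions);  initial stack states (the
labels) have no incoming transitions, are non-final, and label exactly one
transition. -/
def Normalized (n : ℕ) (C : ASTCarrier Γ P) (D : ASTTrans Γ C) : Prop :=
  (∀ (p : P) i m (q : C.Q) σ, ¬ D.deltaT (C.ι p) i m q σ) ∧
  (∀ p : P, C.ι p ∉ C.F) ∧
  (∀ q i m q' σ, D.deltaT q i m q' σ → 1 ≤ i ∧ i ≤ m ∧ q' ∉ C.F) ∧
  (∀ q i m q' σ τ, D.deltaT q i m q' σ → D.deltaT q i m q' τ → σ = τ) ∧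
  (∀ k σ S σ₁ σ₂, D.deltaHi k σ σ₁ S → D.deltaHi k σ σ₂ S → σ₁ = σ₂) ∧
  (∀ σ, TreeLabel C D σ ∨ HiLabel C D σ →
    ¬ IncomingS C D σ ∧ ∀ k, σ ∉ C.Fs k) ∧
  (∀ σ, TreeLabel C D σ → ¬ HiLabel C D σ ∧
    ∀ q i m q' r i' m' r', D.deltaT q i m q' σ → D.deltaT r i' m' r' σ →
      q = r ∧ i = i' ∧ m = m' ∧ q' = r') ∧
  (∀ σ, HiLabel C D σ →
    ∀ k τ S k' τ' S', D.deltaHi k τ σ S → D.deltaHi k' τ' σ S' →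
      k = k' ∧ τ = τ' ∧ S = S')
/-! ## Long-form (short-form) transitions and the saturation function -/

variable {Γ P : Type}

/-- `LongS C D k σ a mb Sb Ss`: the long-form stack transition
`σ —a,Sb→ (Ss 1, …, Ss k)` exists in `D`: there is a chain of transitions
reading the topmost part of each level, ending in an order-1 transition
reading `a` with annotation set `Sb` (of order `mb`). -/
def LongS (C : ASTCarrier Γ P) (D : ASTTrans Γ C) (k : ℕ) (σ : C.SS) (a : Γ)
    (mb : ℕ) (Sb : Set C.SS) (Ss : ℕ → Set C.SS) : Prop :=
  ∃ c : ℕ → C.SS, c k = σ ∧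
    (∀ j, 2 ≤ j → j ≤ k → D.deltaHi j (c j) (c (j - 1)) (Ss j)) ∧
    D.delta1 (c 1) a mb Sb (Ss 1)

/-- Long-form tree transition `q —(i,m)→ q'` reading `a` with `(Sb; Ss 1, …, Ss n)`. -/
def LongT (n : ℕ) (C : ASTCarrier Γ P) (D : ASTTrans Γ C) (q : C.Q) (i m : ℕ)
    (q' : C.Q) (a : Γ) (mb : ℕ) (Sb : Set C.SS) (Ss : ℕ → Set C.SS) : Prop :=
  ∃ σ : C.SS, D.deltaT q i m q' σ ∧ LongS C D n σ a mb Sb Ss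

/-- Partial long-form stack transition from order `khi` down to order `klo`:
`σ —σ'→ (Ss (klo+1), …, Ss khi)`. -/
def LongSK (C : ASTCarrier Γ P) (D : ASTTrans Γ C) (khi klo : ℕ) (σ σ' : C.SS)
    (Ss : ℕ → Set C.SS) : Prop :=
  ∃ c : ℕ → C.SS, c khi = σ ∧ c klo = σ' ∧
    ∀ j, klo + 1 ≤ j → j ≤ khi → D.deltaHi j (c j) (c (j - 1)) (Ss j)

/-- Partial long-form tree transition
`q —(i,m)→ q'` with `σ'` at order `k` and sets `(Ss (k+1), …, Ss n)`. -/
def LongTK (n : ℕ) (C : ASTCarrier Γ P) (D : ASTTrans Γ C) (q : C.Q) (i m : ℕ)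
    (q' : C.Q) (k : ℕ) (σ' : C.SS) (Ss : ℕ → Set C.SS) : Prop :=
  ∃ σ : C.SS, D.deltaT q i m q' σ ∧ LongSK C D n k σ σ' Ss

/-- Lift of an order-1 transition to a set of source states (targets are unioned,
all annotation sets being of the same order `mb`). -/
def Long1Set (C : ASTCarrier Γ P) (D : ASTTrans Γ C) (S₁ : Set C.SS) (a : Γ)
    (mb : ℕ) (Sb S : Set C.SS) : Prop :=
  ∃ fb fs : C.SS → Set C.SS,
    (∀ τ ∈ S₁, D.delta1 τ a mb (fb τ) (fs τ)) ∧
    Sb = ⋃ τ ∈ S₁, fb τ ∧ S = ⋃ τ ∈ S₁, fs τ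

/-- Lift of a long-form stack transition to a set of source states. -/
def LongSSet (C : ASTCarrier Γ P) (D : ASTTrans Γ C) (k : ℕ) (S : Set C.SS) (a : Γ)
    (mb : ℕ) (Sb : Set C.SS) (Ss : ℕ → Set C.SS) : Prop :=
  ∃ (fb : C.SS → Set C.SS) (fs : C.SS → ℕ → Set C.SS),
    (∀ τ ∈ S, LongS C D k τ a mb (fb τ) (fs τ)) ∧
    Sb = ⋃ τ ∈ S, fb τ ∧
    ∀ j, 1 ≤ j → j ≤ k → Ss j = ⋃ τ ∈ S, fs τ j

/-- A long-form transition to be added by saturation. -/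
structure LFT (Γ Q SS : Type) where
  src : Q
  idx : ℕ
  ar : ℕ
  tgt : Q
  ch : Γ
  mb : ℕ
  Sb : Set SS
  Ss : ℕ → Set SS

/-- The long-form transitions derived in one saturation step from the rules of
`G` and the long-form transitions present in `D`
(one case per kind of rewrite rule, as prescribed by the saturation algorithm). -/
inductive DerivedLF (n : ℕ) (G : GASTRS Γ P) (C : ASTCarrier Γ P) (D : ASTTrans Γ C) :
    LFT Γ C.Q C.SS → Prop where
  | rew {p : P} {a b : Γ} {p' : P} {q : C.Q} {i m : ℕ} {mb : ℕ}
      {Sb : Set C.SS} {Ss : ℕ → Set C.SS} :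
      TRule.op p (StackOp.rew a b) p' ∈ G.R →
      LongT n C D q i m (C.ι p') b mb Sb Ss →
      DerivedLF n G C D ⟨q, i, m, C.ι p, a, mb, Sb, Ss⟩
  | cpush {p : P} {k : ℕ} {p' : P} {q : C.Q} {i m : ℕ} {a : Γ}
      {Sb : Set C.SS} {Ss : ℕ → Set C.SS} {mb' : ℕ} {Sb' S₁' : Set C.SS} :
      TRule.op p (StackOp.cpush k) p' ∈ G.R → 1 ≤ k → k ≤ n →
      LongT n C D q i m (C.ι p') a k Sb Ss →
      Long1Set C D (Ss 1) a mb' Sb' S₁' →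
      DerivedLF n G C D ⟨q, i, m, C.ι p, a, mb', Sb',
        fun j => if j = 1 then (if k = 1 then S₁' ∪ Sb else S₁')
                 else if j = k then Ss k ∪ Sb else Ss j⟩
  | push {p : P} {k : ℕ} {p' : P} {q : C.Q} {i m : ℕ} {a : Γ} {mb : ℕ}
      {Sb Sb' : Set C.SS} {Ss Ss' : ℕ → Set C.SS} :
      TRule.op p (StackOp.push k) p' ∈ G.R → 2 ≤ k → k ≤ n →
      LongT n C D q i m (C.ι p') a mb Sb Ss →
      LongSSet C D k (Ss k) a mb Sb' Ss' →
      DerivedLF n G C D ⟨q, i, m, C.ι p, a, mb, Sb ∪ Sb',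
        fun j => if j < k then Ss j ∪ Ss' j else if j = k then Ss' k else Ss j⟩
  | pop {p : P} {k : ℕ} {p' : P} {q : C.Q} {i m : ℕ} {σk : C.SS}
      {Ss : ℕ → Set C.SS} (a : Γ) :
      TRule.op p (StackOp.pop k) p' ∈ G.R → 1 ≤ k → k ≤ n →
      LongTK n C D q i m (C.ι p') k σk Ss →
      DerivedLF n G C D ⟨q, i, m, C.ι p, a, 1, ∅,
        fun j => if j < k then ∅ else if j = k then {σk} else Ss j⟩
  | collapse {p : P} {k : ℕ} {p' : P} {q : C.Q} {i m : ℕ} {σk : C.SS}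
      {Ss : ℕ → Set C.SS} (a : Γ) :
      TRule.op p (StackOp.collapse k) p' ∈ G.R → 1 ≤ k → k ≤ n →
      LongTK n C D q i m (C.ι p') k σk Ss →
      DerivedLF n G C D ⟨q, i, m, C.ι p, a, k, {σk},
        fun j => if j ≤ k then ∅ else Ss j⟩
  | create {p : P} {ps : List P} {q q' : C.Q} {i m : ℕ} {a : Γ} {mb : ℕ}
      {Sb : Set C.SS} {Ss : ℕ → Set C.SS} {fb : ℕ → Set C.SS} {fs : ℕ → ℕ → Set C.SS} :
      TRule.create p ps ∈ G.R → ps ≠ [] →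
      LongT n C D q i m q' a mb Sb Ss →
      (∀ j (hj : j < ps.length),
        LongT n C D q' (j + 1) ps.length (C.ι (ps.get ⟨j, hj⟩)) a mb (fb j) (fs j)) →
      DerivedLF n G C D ⟨q, i, m, C.ι p, a, mb,
        Sb ∪ ⋃ j ∈ Finset.range ps.length, fb j,
        fun l => Ss l ∪ ⋃ j ∈ Finset.range ps.length, fs j l⟩
  | destroy {ps : List P} {p : P} (j : ℕ) (hj : j < ps.length) (a : Γ) :
      TRule.destroy ps p ∈ G.R →
      DerivedLF n G C D
        ⟨C.ι p, j + 1, ps.length, C.ι (ps.get ⟨j, hj⟩), a, 1, ∅, fun _ => ∅⟩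

/-- The canonical chain of fresh states realizing a derived long-form transition:
`lfChain … lf j` is the state at order `n - j`; the order-`n` state is determined
by the endpoints of the tree transition, and each lower state is determined by the
state and target set one order above (so that states and transitions between the
same endpoints are reused across derived transitions). -/
def lfChain {Q SS : Type} (newT : Q → ℕ → ℕ → Q → SS) (newHi : SS → Set SS → SS)
    (n : ℕ) (lf : LFT Γ Q SS) : ℕ → SS
  | 0 => newT lf.src lf.idx lf.ar lf.tgt
  | j + 1 => newHi (lfChain newT newHi n lf j) (lf.Ss (n - j))

/-- The fresh-state functions are injective, mutually disjoint, and avoid the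
states and accepting states of the original automaton. -/
structure FreshFor (C : ASTCarrier Γ P) (D₀ : ASTTrans Γ C)
    (newT : C.Q → ℕ → ℕ → C.Q → C.SS) (newHi : C.SS → Set C.SS → C.SS) : Prop where
  freshT : ∀ q i m q', newT q i m q' ∉ statesOf C D₀ ∧ ∀ k, newT q i m q' ∉ C.Fs k
  freshHi : ∀ σ S, newHi σ S ∉ statesOf C D₀ ∧ ∀ k, newHi σ S ∉ C.Fs k
  injT : ∀ q i m q' r j l r', newT q i m q' = newT r j l r' →
    q = r ∧ i = j ∧ m = l ∧ q' = r'
  injHi : ∀ σ S τ T, newHi σ S = newHi τ T → σ = τ ∧ S = T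
  disj : ∀ q i m q' σ S, newT q i m q' ≠ newHi σ S

/-- One step `Π` of the saturation algorithm: add to `D` the transitions
realizing (via the canonical fresh states) every long-form transition derived
from the rules of `G` and the current transitions. -/
def satStep (n : ℕ) (G : GASTRS Γ P) (C : ASTCarrier Γ P)
    (newT : C.Q → ℕ → ℕ → C.Q → C.SS) (newHi : C.SS → Set C.SS → C.SS)
    (D : ASTTrans Γ C) : ASTTrans Γ C where
  deltaT := fun q i m q' σ => D.deltaT q i m q' σ ∨
    ∃ lf : LFT Γ C.Q C.SS, DerivedLF n G C D lf ∧
      q = lf.src ∧ i = lf.idx ∧ m = lf.ar ∧ q' = lf.tgt ∧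
      σ = lfChain newT newHi n lf 0
  deltaHi := fun k σ σ' S => D.deltaHi k σ σ' S ∨
    ∃ lf : LFT Γ C.Q C.SS, DerivedLF n G C D lf ∧ 2 ≤ k ∧ k ≤ n ∧
      σ = lfChain newT newHi n lf (n - k) ∧
      σ' = lfChain newT newHi n lf (n - k + 1) ∧ S = lf.Ss k
  delta1 := fun σ a mb Sb S => D.delta1 σ a mb Sb S ∨
    ∃ lf : LFT Γ C.Q C.SS, DerivedLF n G C D lf ∧ 1 ≤ n ∧
      σ = lfChain newT newHi n lf (n - 1) ∧
      a = lf.ch ∧ mb = lf.mb ∧ Sb = lf.Sb ∧ S = lf.Ss 1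

/-- The saturation sequence `A₀, Π(A₀), Π²(A₀), …`. -/
def satIter (n : ℕ) (G : GASTRS Γ P) (C : ASTCarrier Γ P)
    (newT : C.Q → ℕ → ℕ → C.Q → C.SS) (newHi : C.SS → Set C.SS → C.SS)
    (D₀ : ASTTrans Γ C) (i : ℕ) : ASTTrans Γ C :=
  (satStep n G C newT newHi)^[i] D₀
/-! ## Meanings of states and soundness (for the correctness of saturation) -/

variable {Γ P : Type}

/-- Update a partial node-to-state map at position `v`. -/
def updEnv {Q : Type} (η : List ℕ → Option Q) (v : List ℕ) (q : Q) :
    List ℕ → Option Q :=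
  fun w => if w = v then some q else η w

/-- `AttachAt t v pairs t'`: `t'` is obtained from `t` by replacing the leaf at
position `v` (labelled `(q₀, s₀)`) by an internal node labelled `s₀` whose
children are new leaves labelled by `pairs`. -/
def AttachAt {L : Type} {n : ℕ} (t : STree Γ L n) (v : List ℕ)
    (pairs : List (L × AnnStack Γ n n)) (t' : STree Γ L n) : Prop :=
  ∃ (q₀ : L) (s₀ : AnnStack Γ n n),
    STree.subtreeAt t v = some (STree.leaf q₀ s₀) ∧
    STree.replaceAt t v
      (STree.node s₀ (pairs.map fun pr => STree.leaf pr.1 pr.2)) = some t'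

/-- The meaning `t ⊨_η qs` of tree-automaton states, w.r.t. the system `G` and
the initial automaton `(C, D₀)`: the extended tree `t`, whose leaf state
sequence is `qs`, can be rewritten by `G` to a tree `t'` accepted by `(C, D₀)`
in the extended sense, such that for every node `v` with `η v = some q`:
if `q` is a control state then `v` appears as a leaf during the rewrite
sequence and carries `q` on the first tree in which it is a leaf;
if `q` is not a control state then `v` is never a leaf and the accepting
run labels `v` by `q`. -/
def Models (n : ℕ) (G : GASTRS Γ P) (C : ASTCarrier Γ P) (D₀ : ASTTrans Γ C)
    (η : List ℕ → Option C.Q) (t : STree Γ C.Q n) (qs : List C.Q) : Prop :=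
  STree.LeavesAre t qs ∧
  ∃ (ts : List (STree Γ C.Q n)) (t' : STree Γ C.Q n) (ρ : List ℕ → C.Q),
    ts.head? = some t ∧ ts.getLast? = some t' ∧ List.Chain' (StepI G C.ι) ts ∧
    IsRun n C D₀ id t' ρ ∧ RootAcc n C D₀ t' ρ ∧
    ∀ (v : List ℕ) (q : C.Q), η v = some q →
      ((q ∈ Set.range C.ι →
          ∃ i, ∃ hi : i < ts.length,
            (∀ j (hj : j < i), ¬ STree.HasLeafAt (ts.get ⟨j, by omega⟩) v) ∧
            STree.LeafLabelAt (ts.get ⟨i, hi⟩) v q) ∧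
       (q ∉ Set.range C.ι →
          (∀ i (hi : i < ts.length), ¬ STree.HasLeafAt (ts.get ⟨i, hi⟩) v) ∧
          (∃ sub, STree.subtreeAt t' v = some sub) ∧ ρ v = q))

/-- The defining condition for the meaning of an order-`n` stack state labelling
the tree transition `q —(i,m)→ q'`, applied to a stack `s` (item 3 of the
definition of `⊨` in the paper): for every tree `t ⊨_η ū₁, q, ū₂`, every family
of transitions `q —(l,m),σ_l→ q_l` and stacks `s₁, …, s_m` such that extending
`t` at the designated leaf by the children `(q_1,s_1), …, (q_m,s_m)` satisfies
`⊨`, replacing the `i`-th new child by `(q', s)` again satisfies `⊨`. -/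
def BigCond (n : ℕ) (G : GASTRS Γ P) (C : ASTCarrier Γ P) (D D₀ : ASTTrans Γ C)
    (q : C.Q) (i m : ℕ) (q' : C.Q) (s : AnnStack Γ n n) : Prop :=
  ∀ (qs₁ qs₂ : List C.Q) (η : List ℕ → Option C.Q) (t : STree Γ C.Q n)
    (vs : List (List ℕ)) (v : List ℕ) (qsm : List C.Q)
    (ss : List (AnnStack Γ n n)) (σs : ℕ → C.SS) (t₂ t₃ : STree Γ C.Q n),
    Models n G C D₀ η t (qs₁ ++ q :: qs₂) →
    STree.LeafPosList t vs → vs[qs₁.length]? = some v →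
    qsm.length = m → ss.length = m →
    (∀ l, l < m → D.deltaT q (l + 1) m (qsm.getD l q) (σs l)) →
    AttachAt t v (qsm.zip ss) t₂ →
    Models n G C D₀ (updEnv η v q) t₂ (qs₁ ++ qsm ++ qs₂) →
    1 ≤ i → i ≤ m →
    AttachAt t v ((qsm.zip ss).set (i - 1) (q', s)) t₃ →
    Models n G C D₀ (updEnv η v q) t₃ (qs₁ ++ qsm.set (i - 1) q' ++ qs₂)

/-- The meaning `s ⊨ σ` of stack-automaton states of the automaton `(C, D)`
w.r.t. `G` and the initial automaton `(C, D₀)`: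
non-initial states mean the stacks they accept; an initial state of order
`k < n` labelling a transition `σ_{k+1} —σ→ S` means all stacks `s` such that
`s :_{k+1} s' ⊨ σ_{k+1}` whenever `s' ⊨ S`; an initial order-`n` state
labelling a tree transition means the tree condition `BigCond`. -/
def SModels (n : ℕ) (G : GASTRS Γ P) (C : ASTCarrier Γ P) (D D₀ : ASTTrans Γ C)
    (k : ℕ) (σ : C.SS) (s : AnnStack Γ n k) : Prop :=
  (∀ _hkn : k < n,
    (HiLabel C D σ →
      ∀ (τ : C.SS) (S : Set C.SS), D.deltaHi (k + 1) τ σ S →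
        ∀ (hk1 : 1 ≤ k) (s' : AnnStack Γ n (k + 1)),
          (∀ υ ∈ S, SModels n G C D D₀ (k + 1) υ s') →
          SModels n G C D D₀ (k + 1) τ (AnnStack.consK hk1 s s')) ∧
    (¬ HiLabel C D σ → SAcc n C D k σ s)) ∧
  (∀ _hkn : ¬ k < n,
    (TreeLabel C D σ →
      ∀ (h : k = n) (q : C.Q) (i m : ℕ) (q' : C.Q), D.deltaT q i m q' σ →
        BigCond n G C D D₀ q i m q' (cast (congrArg (AnnStack Γ n) h) s)) ∧
    (¬ TreeLabel C D σ → SAcc n C D k σ s))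
termination_by n - k
decreasing_by all_goals omega

/-- `buildStack a sb f k` is the order-`k` stack
`⟨a, sb⟩ :₁ f 1 :₂ f 2 :₃ ⋯ :_k f k`. -/
def buildStack {n : ℕ} (a : Γ) {mb : ℕ} (hm : 1 ≤ mb) (hmn : mb ≤ n)
    (sb : AnnStack Γ n mb) (f : (j : ℕ) → AnnStack Γ n j) :
    (k : ℕ) → AnnStack Γ n k
  | 0 => AnnStack.nil 0
  | 1 => AnnStack.cons1 a hm hmn sb (f 1)
  | j + 2 => AnnStack.consK (Nat.succ_le_succ (Nat.zero_le j))
      (buildStack a hm hmn sb f (j + 1)) (f (j + 2))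

/-- Soundness of a long-form stack transition `σ —a,Sb→ (Ss 1, …, Ss k)`:
whenever `s_j ⊨ Ss j` for all `j ≤ k` and `sb ⊨ Sb`, the composed stack
`⟨a,sb⟩ :₁ s₁ :₂ ⋯ :_k s_k` satisfies `⊨ σ`. -/
def SoundS (n : ℕ) (G : GASTRS Γ P) (C : ASTCarrier Γ P) (D D₀ : ASTTrans Γ C)
    (k : ℕ) (σ : C.SS) (a : Γ) (mb : ℕ) (Sb : Set C.SS) (Ss : ℕ → Set C.SS) : Prop :=
  ∀ (hm : 1 ≤ mb) (hmn : mb ≤ n) (sb : AnnStack Γ n mb)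
    (f : (j : ℕ) → AnnStack Γ n j),
    (∀ τ ∈ Sb, SModels n G C D D₀ mb τ sb) →
    (∀ j, 1 ≤ j → j ≤ k → ∀ τ ∈ Ss j, SModels n G C D D₀ j τ (f j)) →
    SModels n G C D D₀ k σ (buildStack a hm hmn sb f k)

/-- Soundness of a long-form tree transition `q —(i,m)→ q'` reading `a` with
`(Sb; Ss 1, …, Ss n)`. -/
def SoundT (n : ℕ) (G : GASTRS Γ P) (C : ASTCarrier Γ P) (D D₀ : ASTTrans Γ C)
    (q : C.Q) (i m : ℕ) (q' : C.Q) (a : Γ) (mb : ℕ) (Sb : Set C.SS)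
    (Ss : ℕ → Set C.SS) : Prop :=
  ∀ (hm : 1 ≤ mb) (hmn : mb ≤ n) (sb : AnnStack Γ n mb)
    (f : (j : ℕ) → AnnStack Γ n j),
    (∀ τ ∈ Sb, SModels n G C D D₀ mb τ sb) →
    (∀ j, 1 ≤ j → j ≤ n → ∀ τ ∈ Ss j, SModels n G C D D₀ j τ (f j)) →
    BigCond n G C D D₀ q i m q' (buildStack a hm hmn sb f n)

/-- `D` is obtained from `D₀` by adding only new initial stack states and
transitions starting at initial states (new tree transitions target control
states and are labelled by new states; new stack transitions start at new states). -/
def ExtendsInit (C : ASTCarrier Γ P) (D₀ D : ASTTrans Γ C) : Prop :=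
  (∀ q i m q' σ, D₀.deltaT q i m q' σ → D.deltaT q i m q' σ) ∧
  (∀ k σ σ' S, D₀.deltaHi k σ σ' S → D.deltaHi k σ σ' S) ∧
  (∀ σ a mb Sb S, D₀.delta1 σ a mb Sb S → D.delta1 σ a mb Sb S) ∧
  (∀ q i m q' σ, D.deltaT q i m q' σ →
    D₀.deltaT q i m q' σ ∨ ((∃ p : P, q' = C.ι p) ∧ σ ∉ statesOf C D₀)) ∧
  (∀ k σ σ' S, D.deltaHi k σ σ' S → D₀.deltaHi k σ σ' S ∨ σ ∉ statesOf C D₀) ∧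
  (∀ σ a mb Sb S, D.delta1 σ a mb Sb S → D₀.delta1 σ a mb Sb S ∨ σ ∉ statesOf C D₀)

/-- Non-redundancy: every tree state with incoming transitions admits a family
of transitions which can be realized by suitable stacks extending any tree
satisfying `⊨` at a designated leaf. -/
def NonRedundant (n : ℕ) (G : GASTRS Γ P) (C : ASTCarrier Γ P)
    (D D₀ : ASTTrans Γ C) : Prop :=
  ∀ q : C.Q, (∃ q₀ i m σ, D.deltaT q₀ i m q σ) →
    ∃ (m : ℕ) (qsm : List C.Q) (σs : ℕ → C.SS), qsm.length = m ∧ 1 ≤ m ∧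
      (∀ l, l < m → D.deltaT q (l + 1) m (qsm.getD l q) (σs l)) ∧
      ∀ (qs₁ qs₂ : List C.Q) (η : List ℕ → Option C.Q) (t : STree Γ C.Q n)
        (vs : List (List ℕ)) (v : List ℕ),
        Models n G C D₀ η t (qs₁ ++ q :: qs₂) →
        STree.LeafPosList t vs → vs[qs₁.length]? = some v →
        ∃ (ss : List (AnnStack Γ n n)) (t₂ : STree Γ C.Q n), ss.length = m ∧
          AttachAt t v (qsm.zip ss) t₂ ∧
          Models n G C D₀ (updEnv η v q) t₂ (qs₁ ++ qsm ++ qs₂)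

/-- All long-form transitions of `D` are sound. -/
def AllSound (n : ℕ) (G : GASTRS Γ P) (C : ASTCarrier Γ P)
    (D₀ D : ASTTrans Γ C) : Prop :=
  (∀ q i m q' a mb Sb Ss, LongT n C D q i m q' a mb Sb Ss →
     SoundT n G C D D₀ q i m q' a mb Sb Ss) ∧
  (∀ k σ a mb Sb Ss, 1 ≤ k → k ≤ n → LongS C D k σ a mb Sb Ss →
     SoundS n G C D D₀ k σ a mb Sb Ss)

/-- A sound annotated stack tree automaton (w.r.t. `G` and the initial
automaton `(C, D₀)`). -/
def SoundAut (n : ℕ) (G : GASTRS Γ P) (C : ASTCarrier Γ P)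
    (D₀ D : ASTTrans Γ C) : Prop :=
  ExtendsInit C D₀ D ∧ AllSound n G C D₀ D ∧ NonRedundant n G C D D₀

/-! ## GASTRS with global state and context-bounded reachability -/

/-- An order-`n` GASTRS with global state: operations are guarded by a pair of
global states. -/
structure GGASTRS (Γ P GS : Type) where
  R : Set (GS × TRule Γ P × GS)
  finR : R.Finite

/-- The GASTRS with the single rule `r`. -/
def singletonG (r : TRule Γ P) : GASTRS Γ P :=
  ⟨{r}, Set.finite_singleton r⟩

/-- `GReach H c c' m`: there is a run from configuration `c` to configuration
`c'` with exactly `m` global-state-changing transitions. -/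
inductive GReach {GS : Type} {n : ℕ} (H : GGASTRS Γ P GS) :
    GS × STree Γ P n → GS × STree Γ P n → ℕ → Prop where
  | refl (c : GS × STree Γ P n) : GReach H c c 0
  | stepSame {g : GS} {r : TRule Γ P} {t t' : STree Γ P n}
      {c : GS × STree Γ P n} {m : ℕ} :
      (g, r, g) ∈ H.R → StepI (singletonG r) id t t' →
      GReach H (g, t') c m → GReach H (g, t) c m
  | stepChange {g g' : GS} {r : TRule Γ P} {t t' : STree Γ P n}
      {c : GS × STree Γ P n} {m : ℕ} :
      (g, r, g') ∈ H.R → g ≠ g' → StepI (singletonG r) id t t' →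
      GReach H (g', t') c m → GReach H (g, t) c (m + 1)

namespace ASTInter

variable {Γ P : Type}

/-- Embedding of the first automaton's stack states. -/
def e1 (C₁ C₂ : ASTCarrier Γ P) (σ : C₁.SS) : (C₁.SS × C₂.SS) ⊕ C₁.SS ⊕ C₂.SS :=
  Sum.inr (Sum.inl σ)

/-- Embedding of the second automaton's stack states. -/
def e2 (C₁ C₂ : ASTCarrier Γ P) (σ : C₂.SS) : (C₁.SS × C₂.SS) ⊕ C₁.SS ⊕ C₂.SS :=
  Sum.inr (Sum.inr σ)

/-- The product carrier. -/
def pC (C₁ C₂ : ASTCarrier Γ P) : ASTCarrier Γ P where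
  Q := C₁.Q × C₂.Q
  ι := fun p => (C₁.ι p, C₂.ι p)
  ι_inj := fun a b h => C₁.ι_inj (congrArg Prod.fst h)
  F := C₁.F ×ˢ C₂.F
  SS := (C₁.SS × C₂.SS) ⊕ C₁.SS ⊕ C₂.SS
  Fs := fun k => e1 C₁ C₂ '' C₁.Fs k ∪ e2 C₁ C₂ '' C₂.Fs k ∪
    Sum.inl '' (C₁.Fs k ×ˢ C₂.Fs k)

/-- Lift of a pair of state sets. -/
def lift2 (C₁ C₂ : ASTCarrier Γ P) (S₁ : Set C₁.SS) (S₂ : Set C₂.SS) :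
    Set ((C₁.SS × C₂.SS) ⊕ C₁.SS ⊕ C₂.SS) :=
  e1 C₁ C₂ '' S₁ ∪ e2 C₁ C₂ '' S₂

/-- The product transition structure. -/
def pD (C₁ : ASTCarrier Γ P) (D₁ : ASTTrans Γ C₁) (C₂ : ASTCarrier Γ P)
    (D₂ : ASTTrans Γ C₂) : ASTTrans Γ (pC C₁ C₂) where
  deltaT := fun q i m q' σ => ∃ σ₁ σ₂, σ = Sum.inl (σ₁, σ₂) ∧
    D₁.deltaT q.1 i m q'.1 σ₁ ∧ D₂.deltaT q.2 i m q'.2 σ₂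
  deltaHi := fun k σ σ' S =>
    (∃ τ τ' S₁, σ = e1 C₁ C₂ τ ∧ σ' = e1 C₁ C₂ τ' ∧ S = e1 C₁ C₂ '' S₁ ∧
      D₁.deltaHi k τ τ' S₁) ∨
    (∃ τ τ' S₂, σ = e2 C₁ C₂ τ ∧ σ' = e2 C₁ C₂ τ' ∧ S = e2 C₁ C₂ '' S₂ ∧
      D₂.deltaHi k τ τ' S₂) ∨
    (∃ σ₁ σ₂ σ₁' σ₂' S₁ S₂, σ = Sum.inl (σ₁, σ₂) ∧ σ' = Sum.inl (σ₁', σ₂') ∧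
      S = lift2 C₁ C₂ S₁ S₂ ∧ D₁.deltaHi k σ₁ σ₁' S₁ ∧ D₂.deltaHi k σ₂ σ₂' S₂)
  delta1 := fun σ a mb Sb S =>
    (∃ τ Sb₁ S₁, σ = e1 C₁ C₂ τ ∧ Sb = e1 C₁ C₂ '' Sb₁ ∧ S = e1 C₁ C₂ '' S₁ ∧
      D₁.delta1 τ a mb Sb₁ S₁) ∨
    (∃ τ Sb₂ S₂, σ = e2 C₁ C₂ τ ∧ Sb = e2 C₁ C₂ '' Sb₂ ∧ S = e2 C₁ C₂ '' S₂ ∧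
      D₂.delta1 τ a mb Sb₂ S₂) ∨
    (∃ σ₁ σ₂ Sb₁ Sb₂ S₁ S₂, σ = Sum.inl (σ₁, σ₂) ∧ Sb = lift2 C₁ C₂ Sb₁ Sb₂ ∧
      S = lift2 C₁ C₂ S₁ S₂ ∧ D₁.delta1 σ₁ a mb Sb₁ S₁ ∧ D₂.delta1 σ₂ a mb Sb₂ S₂)


variable {C₁ : ASTCarrier Γ P} {D₁ : ASTTrans Γ C₁}
variable {C₂ : ASTCarrier Γ P} {D₂ : ASTTrans Γ C₂}

lemma e1_inj {σ τ : C₁.SS} (h : e1 C₁ C₂ σ = e1 C₁ C₂ τ) : σ = τ := by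
  injection h with h; injection h

lemma e2_inj {σ τ : C₂.SS} (h : e2 C₁ C₂ σ = e2 C₁ C₂ τ) : σ = τ := by
  injection h with h; injection h

lemma e1_ne_e2 {σ : C₁.SS} {τ : C₂.SS} (h : e1 C₁ C₂ σ = e2 C₁ C₂ τ) : False := by
  injection h with h; cases h

lemma e2_ne_e1 {σ : C₂.SS} {τ : C₁.SS} (h : e2 C₁ C₂ σ = e1 C₁ C₂ τ) : False := by
  injection h with h; cases h

lemma e1_ne_inl {σ : C₁.SS} {p : C₁.SS × C₂.SS}
    (h : e1 C₁ C₂ σ = Sum.inl p) : False := by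
  cases h

lemma e2_ne_inl {σ : C₂.SS} {p : C₁.SS × C₂.SS}
    (h : e2 C₁ C₂ σ = Sum.inl p) : False := by
  cases h

lemma inl_ne_e1 {σ : C₁.SS} {p : C₁.SS × C₂.SS}
    (h : (Sum.inl p : (C₁.SS × C₂.SS) ⊕ C₁.SS ⊕ C₂.SS) = e1 C₁ C₂ σ) : False := by
  cases h

lemma inl_ne_e2 {σ : C₂.SS} {p : C₁.SS × C₂.SS}
    (h : (Sum.inl p : (C₁.SS × C₂.SS) ⊕ C₁.SS ⊕ C₂.SS) = e2 C₁ C₂ σ) : False := by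
  cases h

lemma inl_inj {σ₁ σ₁' : C₁.SS} {σ₂ σ₂' : C₂.SS}
    (h : (Sum.inl (σ₁, σ₂) : (C₁.SS × C₂.SS) ⊕ C₁.SS ⊕ C₂.SS) = Sum.inl (σ₁', σ₂')) :
    σ₁ = σ₁' ∧ σ₂ = σ₂' := by
  injection h with h
  exact ⟨congrArg Prod.fst h, congrArg Prod.snd h⟩

lemma sacc_fwd {n : ℕ} :
    ∀ {k : ℕ} {σ : (pC C₁ C₂).SS} {s : AnnStack Γ n k},
      SAcc n (pC C₁ C₂) (pD C₁ D₁ C₂ D₂) k σ s →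
      (∀ τ, σ = e1 C₁ C₂ τ → SAcc n C₁ D₁ k τ s) ∧
      (∀ τ, σ = e2 C₁ C₂ τ → SAcc n C₂ D₂ k τ s) ∧
      (∀ σ₁ σ₂, σ = Sum.inl (σ₁, σ₂) → SAcc n C₁ D₁ k σ₁ s ∧ SAcc n C₂ D₂ k σ₂ s) := by
  intro k σ s h
  induction h with
  | nil hσ =>
    rcases hσ with (⟨τ, hτ, rfl⟩ | ⟨τ, hτ, rfl⟩) | ⟨⟨σ₁, σ₂⟩, hτ, rfl⟩
    · refine ⟨fun τ' hτ' => ?_, fun τ' hτ' => ?_, fun σ₁ σ₂ h' => ?_⟩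
      · cases e1_inj hτ'; exact SAcc.nil hτ
      · first | exact (e1_ne_e2 hτ').elim | exact (e2_ne_e1 hτ').elim
      · exact (e1_ne_inl h').elim
    · refine ⟨fun τ' hτ' => ?_, fun τ' hτ' => ?_, fun σ₁ σ₂ h' => ?_⟩
      · first | exact (e1_ne_e2 hτ').elim | exact (e2_ne_e1 hτ').elim
      · cases e2_inj hτ'; exact SAcc.nil hτ
      · exact (e2_ne_inl h').elim
    · refine ⟨fun τ' hτ' => ?_, fun τ' hτ' => ?_, fun σ₁' σ₂' h' => ?_⟩
      · simp [e1] at hτ'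
      · simp [e2] at hτ'
      · obtain ⟨h1, h2⟩ := inl_inj h'
        subst h1; subst h2
        exact ⟨SAcc.nil hτ.1, SAcc.nil hτ.2⟩
  | consK hk hhi hhd htl ihhd ihtl =>
    rcases hhi with ⟨τ, τ', S₁, rfl, rfl, rfl, hhi⟩ | ⟨τ, τ', S₂, rfl, rfl, rfl, hhi⟩ |
      ⟨σ₁, σ₂, σ₁', σ₂', S₁, S₂, rfl, rfl, rfl, hhi₁, hhi₂⟩
    · refine ⟨fun τ'' hτ'' => ?_, fun τ'' hτ'' => ?_, fun σ₁ σ₂ h' => ?_⟩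
      · cases e1_inj hτ''
        exact SAcc.consK hk hhi (ihhd.1 τ' rfl)
          (fun υ hυ => (ihtl _ ⟨υ, hυ, rfl⟩).1 υ rfl)
      · first | exact (e1_ne_e2 hτ'').elim | exact (e2_ne_e1 hτ'').elim
      · exact (e1_ne_inl h').elim
    · refine ⟨fun τ'' hτ'' => ?_, fun τ'' hτ'' => ?_, fun σ₁ σ₂ h' => ?_⟩
      · first | exact (e1_ne_e2 hτ'').elim | exact (e2_ne_e1 hτ'').elim
      · cases e2_inj hτ''
        exact SAcc.consK hk hhi (ihhd.2.1 τ' rfl)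
          (fun υ hυ => (ihtl _ ⟨υ, hυ, rfl⟩).2.1 υ rfl)
      · exact (e2_ne_inl h').elim
    · refine ⟨fun τ'' hτ'' => ?_, fun τ'' hτ'' => ?_, fun σ₁'' σ₂'' h' => ?_⟩
      · first | exact (inl_ne_e1 hτ'').elim | exact (e1_ne_e2 hτ'').elim | exact (e2_ne_e1 hτ'').elim
      · first | exact (inl_ne_e2 hτ'').elim | exact (e1_ne_e2 hτ'').elim | exact (e2_ne_e1 hτ'').elim
      · obtain ⟨h1, h2⟩ := inl_inj h'
        subst h1; subst h2
        constructor
        · exact SAcc.consK hk hhi₁ ((ihhd.2.2 σ₁' σ₂' rfl).1)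
            (fun υ hυ => (ihtl _ (Or.inl ⟨υ, hυ, rfl⟩)).1 υ rfl)
        · exact SAcc.consK hk hhi₂ ((ihhd.2.2 σ₁' σ₂' rfl).2)
            (fun υ hυ => (ihtl _ (Or.inr ⟨υ, hυ, rfl⟩)).2.1 υ rfl)
  | cons1 a hm hmn h1 hann htl ihann ihtl =>
    rcases h1 with ⟨τ, Sb₁, S₁, rfl, rfl, rfl, h1⟩ | ⟨τ, Sb₂, S₂, rfl, rfl, rfl, h1⟩ |
      ⟨σ₁, σ₂, Sb₁, Sb₂, S₁, S₂, rfl, rfl, rfl, h1a, h1b⟩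
    · refine ⟨fun τ'' hτ'' => ?_, fun τ'' hτ'' => ?_, fun σ₁ σ₂ h' => ?_⟩
      · cases e1_inj hτ''
        exact SAcc.cons1 a hm hmn h1
          (fun υ hυ => (ihann _ ⟨υ, hυ, rfl⟩).1 υ rfl)
          (fun υ hυ => (ihtl _ ⟨υ, hυ, rfl⟩).1 υ rfl)
      · first | exact (e1_ne_e2 hτ'').elim | exact (e2_ne_e1 hτ'').elim
      · exact (e1_ne_inl h').elim
    · refine ⟨fun τ'' hτ'' => ?_, fun τ'' hτ'' => ?_, fun σ₁ σ₂ h' => ?_⟩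
      · first | exact (e1_ne_e2 hτ'').elim | exact (e2_ne_e1 hτ'').elim
      · cases e2_inj hτ''
        exact SAcc.cons1 a hm hmn h1
          (fun υ hυ => (ihann _ ⟨υ, hυ, rfl⟩).2.1 υ rfl)
          (fun υ hυ => (ihtl _ ⟨υ, hυ, rfl⟩).2.1 υ rfl)
      · exact (e2_ne_inl h').elim
    · refine ⟨fun τ'' hτ'' => ?_, fun τ'' hτ'' => ?_, fun σ₁'' σ₂'' h' => ?_⟩
      · first | exact (inl_ne_e1 hτ'').elim | exact (e1_ne_e2 hτ'').elim | exact (e2_ne_e1 hτ'').elim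
      · first | exact (inl_ne_e2 hτ'').elim | exact (e1_ne_e2 hτ'').elim | exact (e2_ne_e1 hτ'').elim
      · obtain ⟨h1', h2'⟩ := inl_inj h'
        subst h1'; subst h2'
        constructor
        · exact SAcc.cons1 a hm hmn h1a
            (fun υ hυ => (ihann _ (Or.inl ⟨υ, hυ, rfl⟩)).1 υ rfl)
            (fun υ hυ => (ihtl _ (Or.inl ⟨υ, hυ, rfl⟩)).1 υ rfl)
        · exact SAcc.cons1 a hm hmn h1b
            (fun υ hυ => (ihann _ (Or.inr ⟨υ, hυ, rfl⟩)).2.1 υ rfl)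
            (fun υ hυ => (ihtl _ (Or.inr ⟨υ, hυ, rfl⟩)).2.1 υ rfl)

lemma sacc_bwd1 {n : ℕ} :
    ∀ {k : ℕ} {σ : C₁.SS} {s : AnnStack Γ n k}, SAcc n C₁ D₁ k σ s →
      SAcc n (pC C₁ C₂) (pD C₁ D₁ C₂ D₂) k (e1 C₁ C₂ σ) s := by
  intro k σ s h
  induction h with
  | nil hσ => exact SAcc.nil (Or.inl (Or.inl ⟨_, hσ, rfl⟩))
  | consK hk hhi hhd htl ihhd ihtl =>
    exact SAcc.consK hk (Or.inl ⟨_, _, _, rfl, rfl, rfl, hhi⟩) ihhd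
      (fun υ hυ => by rcases hυ with ⟨τ, hτ, rfl⟩; exact ihtl τ hτ)
  | cons1 a hm hmn h1 hann htl ihann ihtl =>
    exact SAcc.cons1 a hm hmn (Or.inl ⟨_, _, _, rfl, rfl, rfl, h1⟩)
      (fun υ hυ => by rcases hυ with ⟨τ, hτ, rfl⟩; exact ihann τ hτ)
      (fun υ hυ => by rcases hυ with ⟨τ, hτ, rfl⟩; exact ihtl τ hτ)

lemma sacc_bwd2 {n : ℕ} :
    ∀ {k : ℕ} {σ : C₂.SS} {s : AnnStack Γ n k}, SAcc n C₂ D₂ k σ s →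
      SAcc n (pC C₁ C₂) (pD C₁ D₁ C₂ D₂) k (e2 C₁ C₂ σ) s := by
  intro k σ s h
  induction h with
  | nil hσ => exact SAcc.nil (Or.inl (Or.inr ⟨_, hσ, rfl⟩))
  | consK hk hhi hhd htl ihhd ihtl =>
    exact SAcc.consK hk (Or.inr (Or.inl ⟨_, _, _, rfl, rfl, rfl, hhi⟩)) ihhd
      (fun υ hυ => by rcases hυ with ⟨τ, hτ, rfl⟩; exact ihtl τ hτ)
  | cons1 a hm hmn h1 hann htl ihann ihtl =>
    exact SAcc.cons1 a hm hmn (Or.inr (Or.inl ⟨_, _, _, rfl, rfl, rfl, h1⟩))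
      (fun υ hυ => by rcases hυ with ⟨τ, hτ, rfl⟩; exact ihann τ hτ)
      (fun υ hυ => by rcases hυ with ⟨τ, hτ, rfl⟩; exact ihtl τ hτ)

lemma sacc_bwdp {n : ℕ} :
    ∀ {k : ℕ} {σ₁ : C₁.SS} {s : AnnStack Γ n k}, SAcc n C₁ D₁ k σ₁ s →
      ∀ {σ₂ : C₂.SS}, SAcc n C₂ D₂ k σ₂ s →
      SAcc n (pC C₁ C₂) (pD C₁ D₁ C₂ D₂) k (Sum.inl (σ₁, σ₂)) s := by
  intro k σ₁ s h
  induction h with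
  | nil hσ =>
    intro σ₂ h₂
    cases h₂ with
    | nil hσ₂ => exact SAcc.nil (Or.inr ⟨(_, _), ⟨hσ, hσ₂⟩, rfl⟩)
  | consK hk hhi hhd htl ihhd ihtl =>
    intro σ₂ h₂
    cases h₂ with
    | consK hk₂ hhi₂ hhd₂ htl₂ =>
      refine SAcc.consK hk (Or.inr (Or.inr
        ⟨_, _, _, _, _, _, rfl, rfl, rfl, hhi, hhi₂⟩)) (ihhd hhd₂) ?_
      rintro υ (⟨τ, hτ, rfl⟩ | ⟨τ, hτ, rfl⟩)
      · exact sacc_bwd1 (htl τ hτ)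
      · exact sacc_bwd2 (htl₂ τ hτ)
  | cons1 a hm hmn h1 hann htl ihann ihtl =>
    intro σ₂ h₂
    cases h₂ with
    | cons1 _ _ _ h1₂ hann₂ htl₂ =>
      refine SAcc.cons1 a hm hmn (Or.inr (Or.inr
        ⟨_, _, _, _, _, _, rfl, rfl, rfl, h1, h1₂⟩)) ?_ ?_
      · rintro υ (⟨τ, hτ, rfl⟩ | ⟨τ, hτ, rfl⟩)
        · exact sacc_bwd1 (hann τ hτ)
        · exact sacc_bwd2 (hann₂ τ hτ)
      · rintro υ (⟨τ, hτ, rfl⟩ | ⟨τ, hτ, rfl⟩)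
        · exact sacc_bwd1 (htl τ hτ)
        · exact sacc_bwd2 (htl₂ τ hτ)

end ASTInter

namespace ASTInter

variable {Γ P : Type}
variable {C₁ : ASTCarrier Γ P} {D₁ : ASTTrans Γ C₁}
variable {C₂ : ASTCarrier Γ P} {D₂ : ASTTrans Γ C₂}

lemma statesOf_subset :
    statesOf (pC C₁ C₂) (pD C₁ D₁ C₂ D₂) ⊆
      lift2 C₁ C₂ (statesOf C₁ D₁) (statesOf C₂ D₂) ∪
      Sum.inl '' (statesOf C₁ D₁ ×ˢ statesOf C₂ D₂) := by
  intro σ hσ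
  rcases hσ with ⟨q, i, m, q', σ₁, σ₂, rfl, h1, h2⟩ | ⟨k, σ', S, hHi⟩ |
    ⟨k, τ, S, hHi⟩ | ⟨k, τ, σ', S, hHi, hmem⟩ | ⟨a, mb, Sb, S, h1⟩ |
    ⟨τ, a, mb, Sb, S, h1, hmem⟩
  · exact Or.inr ⟨(σ₁, σ₂), ⟨Or.inl ⟨_, _, _, _, h1⟩, Or.inl ⟨_, _, _, _, h2⟩⟩, rfl⟩
  · rcases hHi with ⟨υ, υ', S₁, rfl, _, _, hd⟩ | ⟨υ, υ', S₂, rfl, _, _, hd⟩ |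
      ⟨σ₁, σ₂, σ₁', σ₂', S₁, S₂, rfl, _, _, hd₁, hd₂⟩
    · exact Or.inl (Or.inl ⟨υ, Or.inr (Or.inl ⟨_, _, _, hd⟩), rfl⟩)
    · exact Or.inl (Or.inr ⟨υ, Or.inr (Or.inl ⟨_, _, _, hd⟩), rfl⟩)
    · exact Or.inr ⟨(σ₁, σ₂), ⟨Or.inr (Or.inl ⟨_, _, _, hd₁⟩),
        Or.inr (Or.inl ⟨_, _, _, hd₂⟩)⟩, rfl⟩
  · rcases hHi with ⟨υ, υ', S₁, _, rfl, _, hd⟩ | ⟨υ, υ', S₂, _, rfl, _, hd⟩ |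
      ⟨σ₁, σ₂, σ₁', σ₂', S₁, S₂, _, rfl, _, hd₁, hd₂⟩
    · exact Or.inl (Or.inl ⟨υ', Or.inr (Or.inr (Or.inl ⟨_, _, _, hd⟩)), rfl⟩)
    · exact Or.inl (Or.inr ⟨υ', Or.inr (Or.inr (Or.inl ⟨_, _, _, hd⟩)), rfl⟩)
    · exact Or.inr ⟨(σ₁', σ₂'), ⟨Or.inr (Or.inr (Or.inl ⟨_, _, _, hd₁⟩)),
        Or.inr (Or.inr (Or.inl ⟨_, _, _, hd₂⟩))⟩, rfl⟩
  · rcases hHi with ⟨υ, υ', S₁, _, _, rfl, hd⟩ | ⟨υ, υ', S₂, _, _, rfl, hd⟩ |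
      ⟨σ₁, σ₂, σ₁', σ₂', S₁, S₂, _, _, rfl, hd₁, hd₂⟩
    · rcases hmem with ⟨ν, hν, rfl⟩
      exact Or.inl (Or.inl ⟨ν, Or.inr (Or.inr (Or.inr (Or.inl ⟨_, _, _, _, hd, hν⟩))), rfl⟩)
    · rcases hmem with ⟨ν, hν, rfl⟩
      exact Or.inl (Or.inr ⟨ν, Or.inr (Or.inr (Or.inr (Or.inl ⟨_, _, _, _, hd, hν⟩))), rfl⟩)
    · rcases hmem with ⟨ν, hν, rfl⟩ | ⟨ν, hν, rfl⟩
      · exact Or.inl (Or.inl ⟨ν, Or.inr (Or.inr (Or.inr (Or.inl ⟨_, _, _, _, hd₁, hν⟩))), rfl⟩)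
      · exact Or.inl (Or.inr ⟨ν, Or.inr (Or.inr (Or.inr (Or.inl ⟨_, _, _, _, hd₂, hν⟩))), rfl⟩)
  · rcases h1 with ⟨υ, Sb₁, S₁, rfl, _, _, hd⟩ | ⟨υ, Sb₂, S₂, rfl, _, _, hd⟩ |
      ⟨σ₁, σ₂, Sb₁, Sb₂, S₁, S₂, rfl, _, _, hd₁, hd₂⟩
    · exact Or.inl (Or.inl ⟨υ, Or.inr (Or.inr (Or.inr (Or.inr (Or.inl ⟨_, _, _, _, hd⟩)))), rfl⟩)
    · exact Or.inl (Or.inr ⟨υ, Or.inr (Or.inr (Or.inr (Or.inr (Or.inl ⟨_, _, _, _, hd⟩)))), rfl⟩)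
    · exact Or.inr ⟨(σ₁, σ₂), ⟨Or.inr (Or.inr (Or.inr (Or.inr (Or.inl ⟨_, _, _, _, hd₁⟩)))),
        Or.inr (Or.inr (Or.inr (Or.inr (Or.inl ⟨_, _, _, _, hd₂⟩))))⟩, rfl⟩
  · rcases h1 with ⟨υ, Sb₁, S₁, _, rfl, rfl, hd⟩ | ⟨υ, Sb₂, S₂, _, rfl, rfl, hd⟩ |
      ⟨σ₁, σ₂, Sb₁, Sb₂, S₁, S₂, _, rfl, rfl, hd₁, hd₂⟩
    · rcases hmem with ⟨ν, hν, rfl⟩ | ⟨ν, hν, rfl⟩ <;>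
        exact Or.inl (Or.inl ⟨ν, Or.inr (Or.inr (Or.inr (Or.inr (Or.inr
          ⟨_, _, _, _, _, hd, by tauto⟩)))), rfl⟩)
    · rcases hmem with ⟨ν, hν, rfl⟩ | ⟨ν, hν, rfl⟩ <;>
        exact Or.inl (Or.inr ⟨ν, Or.inr (Or.inr (Or.inr (Or.inr (Or.inr
          ⟨_, _, _, _, _, hd, by tauto⟩)))), rfl⟩)
    · rcases hmem with (⟨ν, hν, rfl⟩ | ⟨ν, hν, rfl⟩) | (⟨ν, hν, rfl⟩ | ⟨ν, hν, rfl⟩)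
      · exact Or.inl (Or.inl ⟨ν, Or.inr (Or.inr (Or.inr (Or.inr (Or.inr
          ⟨_, _, _, _, _, hd₁, Or.inl hν⟩)))), rfl⟩)
      · exact Or.inl (Or.inr ⟨ν, Or.inr (Or.inr (Or.inr (Or.inr (Or.inr
          ⟨_, _, _, _, _, hd₂, Or.inl hν⟩)))), rfl⟩)
      · exact Or.inl (Or.inl ⟨ν, Or.inr (Or.inr (Or.inr (Or.inr (Or.inr
          ⟨_, _, _, _, _, hd₁, Or.inr hν⟩)))), rfl⟩)
      · exact Or.inl (Or.inr ⟨ν, Or.inr (Or.inr (Or.inr (Or.inr (Or.inr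
          ⟨_, _, _, _, _, hd₂, Or.inr hν⟩)))), rfl⟩)

lemma finiteAut_pD (h₁ : FiniteAut C₁ D₁) (h₂ : FiniteAut C₂ D₂) :
    FiniteAut (pC C₁ C₂) (pD C₁ D₁ C₂ D₂) := by
  obtain ⟨hQ₁, hS₁, hF₁⟩ := h₁
  obtain ⟨hQ₂, hS₂, hF₂⟩ := h₂
  refine ⟨?_, ?_, ?_⟩
  · haveI := hQ₁; haveI := hQ₂; exact inferInstanceAs (Finite (C₁.Q × C₂.Q))
  · refine Set.Finite.subset ?_ (statesOf_subset)
    exact Set.Finite.union (Set.Finite.union (hS₁.image _) (hS₂.image _))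
      ((hS₁.prod hS₂).image _)
  · intro k
    exact Set.Finite.union (Set.Finite.union ((hF₁ k).image _) ((hF₂ k).image _))
      (((hF₁ k).prod (hF₂ k)).image _)

lemma accepts_iff {n : ℕ} (t : STree Γ P n) :
    AcceptsFrom n (pC C₁ C₂) (pD C₁ D₁ C₂ D₂) (pC C₁ C₂).ι t ↔
    AcceptsFrom n C₁ D₁ C₁.ι t ∧ AcceptsFrom n C₂ D₂ C₂.ι t := by
  constructor
  · rintro ⟨ρ, ⟨hleaf, hnode⟩, qf, σ, hqf, hδ, hacc⟩
    rcases hδ with ⟨σ₁, σ₂, rfl, hδ₁, hδ₂⟩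
    constructor
    · refine ⟨fun v => (ρ v).1, ⟨?_, ?_⟩, qf.1, σ₁, hqf.1, hδ₁,
        ((sacc_fwd hacc).2.2 σ₁ σ₂ rfl).1⟩
      · intro v q s hsub; exact congrArg Prod.fst (hleaf v q s hsub)
      · intro v s cs hsub i hi
        obtain ⟨σ, hδ, hacc'⟩ := hnode v s cs hsub i hi
        rcases hδ with ⟨σ₁', σ₂', rfl, hδ₁', hδ₂'⟩
        exact ⟨σ₁', hδ₁', ((sacc_fwd hacc').2.2 σ₁' σ₂' rfl).1⟩
    · refine ⟨fun v => (ρ v).2, ⟨?_, ?_⟩, qf.2, σ₂, hqf.2, hδ₂,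
        ((sacc_fwd hacc).2.2 σ₁ σ₂ rfl).2⟩
      · intro v q s hsub; exact congrArg Prod.snd (hleaf v q s hsub)
      · intro v s cs hsub i hi
        obtain ⟨σ, hδ, hacc'⟩ := hnode v s cs hsub i hi
        rcases hδ with ⟨σ₁', σ₂', rfl, hδ₁', hδ₂'⟩
        exact ⟨σ₂', hδ₂', ((sacc_fwd hacc').2.2 σ₁' σ₂' rfl).2⟩
  · rintro ⟨⟨ρ₁, ⟨hleaf₁, hnode₁⟩, qf₁, σ₁, hqf₁, hδ₁, hacc₁⟩,
      ⟨ρ₂, ⟨hleaf₂, hnode₂⟩, qf₂, σ₂, hqf₂, hδ₂, hacc₂⟩⟩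
    refine ⟨fun v => (ρ₁ v, ρ₂ v), ⟨?_, ?_⟩,
      (qf₁, qf₂), Sum.inl (σ₁, σ₂), ⟨hqf₁, hqf₂⟩,
      ⟨σ₁, σ₂, rfl, hδ₁, hδ₂⟩, sacc_bwdp hacc₁ hacc₂⟩
    · intro v q s hsub
      exact Prod.ext (hleaf₁ v q s hsub) (hleaf₂ v q s hsub)
    · intro v s cs hsub i hi
      obtain ⟨τ₁, hδ₁', hacc₁'⟩ := hnode₁ v s cs hsub i hi
      obtain ⟨τ₂, hδ₂', hacc₂'⟩ := hnode₂ v s cs hsub i hi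
      exact ⟨Sum.inl (τ₁, τ₂), ⟨τ₁, τ₂, rfl, hδ₁', hδ₂'⟩, sacc_bwdp hacc₁' hacc₂'⟩

end ASTInter

/-! ### STATEMENT 3 -/

/-- Annotated stack tree automata are effectively closed under intersection:
for any two order-`n` annotated stack tree automata `A = (C₁, D₁)` and
`A' = (C₂, D₂)` over the same alphabet `Γ` and control states `P`, there exists
an order-`n` annotated stack tree automaton `A''` with `L(A'') = L(A) ∩ L(A')`. -/
theorem astta_intersection {Γ P : Type} [Finite Γ] [Finite P] (n : ℕ) (hn : 1 ≤ n)
    (C₁ : ASTCarrier Γ P) (D₁ : ASTTrans Γ C₁)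
    (C₂ : ASTCarrier Γ P) (D₂ : ASTTrans Γ C₂)
    (h₁ : FiniteAut C₁ D₁) (h₂ : FiniteAut C₂ D₂) :
    ∃ (C' : ASTCarrier Γ P) (D' : ASTTrans Γ C'),
      FiniteAut C' D' ∧ Lang n C' D' = Lang n C₁ D₁ ∩ Lang n C₂ D₂ := by
  refine ⟨ASTInter.pC C₁ C₂, ASTInter.pD C₁ D₁ C₂ D₂, ASTInter.finiteAut_pD h₁ h₂, ?_⟩
  ext t
  simp only [Lang, Set.mem_setOf_eq, Set.mem_inter_iff]
  constructor
  · rintro ⟨hwf, hacc⟩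
    obtain ⟨ha, hb⟩ := (ASTInter.accepts_iff t).mp hacc
    exact ⟨⟨hwf, ha⟩, ⟨hwf, hb⟩⟩
  · rintro ⟨⟨hwf, ha⟩, ⟨_, hb⟩⟩
    exact ⟨hwf, (ASTInter.accepts_iff t).mpr ⟨ha, hb⟩⟩
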